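/- A matrix sequence {A_N}, with A_N of size N×N, is zero-distributed in the sense of singular values if and only if there exist decompositions A_N = R_N + E_N with rank(R_N)/N → 0 and ‖E_N‖₂ → 0 as N → ∞. -/

import Mathlib

/-- The singular values of a complex square matrix: square roots of the eigenvalues of
`Aᴴ * A`. -/
noncomputable def singularValues {N : ℕ} (A : Matrix (Fin N) (Fin N) ℂ) : Fin N → ℝ :=
  fun j => Real.sqrt ((Matrix.isHermitian_conjTranspose_mul_self A).eigenvalues j)

/-- The spectral (L²-operator) norm of a complex square matrix. -/
noncomputable def specNorm {N : ℕ} (A : Matrix (Fin N) (Fin N) ℂ) : ℝ :=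
  ‖Matrix.toEuclideanCLM (𝕜 := ℂ) A‖

open Matrix Filter Finset
open scoped InnerProductSpace ComplexOrder

namespace ZD

variable {N : ℕ}

/-- Parseval for orthonormal bases over finite index. -/
lemma parseval (b : OrthonormalBasis (Fin N) ℂ (EuclideanSpace ℂ (Fin N)))
    (x : EuclideanSpace ℂ (Fin N)) :
    ‖x‖ ^ 2 = ∑ j, ‖⟪b j, x⟫_ℂ‖ ^ 2 := by
  have h1 : ‖x‖ = ‖b.repr x‖ := (b.repr.norm_map x).symm
  rw [h1, EuclideanSpace.norm_eq, Real.sq_sqrt (by positivity)]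
  exact Finset.sum_congr rfl fun j _ => by rw [b.repr_apply_apply]

lemma norm_CLM_apply_sq (A : Matrix (Fin N) (Fin N) ℂ)
    (x : EuclideanSpace ℂ (Fin N)) :
    ‖Matrix.toEuclideanCLM (𝕜 := ℂ) A x‖ ^ 2 =
      ∑ j, (Matrix.isHermitian_conjTranspose_mul_self A).eigenvalues j *
        ‖⟪(Matrix.isHermitian_conjTranspose_mul_self A).eigenvectorBasis j, x⟫_ℂ‖ ^ 2 := by
  set hH := Matrix.isHermitian_conjTranspose_mul_self A with hHdef
  set b := hH.eigenvectorBasis with hbdef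
  set T := Matrix.toEuclideanCLM (𝕜 := ℂ) A with hTdef
  set S := Matrix.toEuclideanCLM (𝕜 := ℂ) (Aᴴ * A) with hSdef
  have hS_apply : ∀ j, S (b j) = (hH.eigenvalues j : ℂ) • b j := by
    intro j
    have h1 : (Aᴴ * A) *ᵥ ⇑(b j) = hH.eigenvalues j • ⇑(b j) := hH.mulVec_eigenvectorBasis j
    have h2 : S ((WithLp.equiv 2 (Fin N → ℂ)).symm ⇑(b j)) =
        (WithLp.equiv 2 (Fin N → ℂ)).symm (Matrix.toLin' (Aᴴ * A) ⇑(b j)) :=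
      Matrix.toEuclideanCLM_toLp _ _
    have h3 : (WithLp.equiv 2 (Fin N → ℂ)).symm ⇑(b j) = b j := rfl
    rw [h3] at h2
    rw [h2, Matrix.toLin'_apply, h1]
    ext i
    simp [Equiv.refl_apply, PiLp.smul_apply, Complex.real_smul]
  have hadj : ⟪T x, T x⟫_ℂ = ⟪x, S x⟫_ℂ := by
    have hstar : Matrix.toEuclideanCLM (𝕜 := ℂ) Aᴴ = ContinuousLinearMap.adjoint T := by
      rw [← ContinuousLinearMap.star_eq_adjoint, hTdef, ← map_star]
      rfl
    have hprod : S = ContinuousLinearMap.adjoint T * T := by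
      rw [hSdef, hTdef, ← hstar]
      exact _root_.map_mul _ _ _
    rw [hprod, ContinuousLinearMap.mul_apply, ContinuousLinearMap.adjoint_inner_right]
  have hSx : ∀ j, ⟪b j, S x⟫_ℂ = (hH.eigenvalues j : ℂ) * ⟪b j, x⟫_ℂ := by
    intro j
    have hx2 : S x = ∑ i, (hH.eigenvalues i : ℂ) • (⟪b i, x⟫_ℂ • b i) := by
      conv_lhs => rw [← b.sum_repr' x]
      rw [map_sum]
      refine Finset.sum_congr rfl fun i _ => ?_
      rw [ContinuousLinearMap.map_smul, hS_apply i, smul_comm]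
    rw [hx2, inner_sum]
    have horth := orthonormal_iff_ite.mp b.orthonormal
    simp only [inner_smul_right, horth]
    rw [Finset.sum_eq_single j]
    · simp
    · intro i _ hij
      simp [Ne.symm hij]
    · simp
  have hsum : ⟪x, S x⟫_ℂ = ∑ j, ((hH.eigenvalues j : ℂ) * ((‖⟪b j, x⟫_ℂ‖ : ℂ)) ^ 2) := by
    rw [← b.sum_inner_mul_inner x (S x)]
    refine Finset.sum_congr rfl fun j _ => ?_
    rw [hSx j, ← inner_conj_symm x (b j)]
    set z := ⟪b j, x⟫_ℂ with hzdef
    rw [show (starRingEnd ℂ) z * ((hH.eigenvalues j : ℂ) * z)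
        = (hH.eigenvalues j : ℂ) * (z * (starRingEnd ℂ) z) from by ring, RCLike.mul_conj]
    norm_num
  have hx : ((‖T x‖ : ℂ)) ^ 2 = ⟪T x, T x⟫_ℂ := (inner_self_eq_norm_sq_to_K (T x)).symm
  have hfin := hx.trans (hadj.trans hsum)
  have h2 : ((‖T x‖ ^ 2 : ℝ) : ℂ)
      = ((∑ j, hH.eigenvalues j * ‖⟪b j, x⟫_ℂ‖ ^ 2 : ℝ) : ℂ) := by
    push_cast
    exact hfin
  exact_mod_cast h2

noncomputable def projCLM (b : OrthonormalBasis (Fin N) ℂ (EuclideanSpace ℂ (Fin N)))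
    (S : Finset (Fin N)) : EuclideanSpace ℂ (Fin N) →L[ℂ] EuclideanSpace ℂ (Fin N) :=
  ∑ j ∈ S, (innerSL ℂ (b j)).smulRight (b j)

lemma projCLM_apply (b : OrthonormalBasis (Fin N) ℂ (EuclideanSpace ℂ (Fin N)))
    (S : Finset (Fin N)) (x : EuclideanSpace ℂ (Fin N)) :
    projCLM b S x = ∑ j ∈ S, ⟪b j, x⟫_ℂ • b j := by
  simp [projCLM]

lemma inner_projCLM (b : OrthonormalBasis (Fin N) ℂ (EuclideanSpace ℂ (Fin N)))
    (S : Finset (Fin N)) (i : Fin N) (x : EuclideanSpace ℂ (Fin N)) :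
    ⟪b i, projCLM b S x⟫_ℂ = if i ∈ S then ⟪b i, x⟫_ℂ else 0 := by
  rw [projCLM_apply, inner_sum]
  simp only [inner_smul_right, orthonormal_iff_ite.mp b.orthonormal, mul_ite, mul_one, mul_zero]
  rw [Finset.sum_ite_eq]

noncomputable def projMatrix (b : OrthonormalBasis (Fin N) ℂ (EuclideanSpace ℂ (Fin N)))
    (S : Finset (Fin N)) : Matrix (Fin N) (Fin N) ℂ :=
  (Matrix.toEuclideanCLM (𝕜 := ℂ)).symm (projCLM b S)

lemma toEuclideanCLM_projMatrix (b : OrthonormalBasis (Fin N) ℂ (EuclideanSpace ℂ (Fin N)))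
    (S : Finset (Fin N)) :
    Matrix.toEuclideanCLM (𝕜 := ℂ) (projMatrix b S) = projCLM b S :=
  StarAlgEquiv.apply_symm_apply _ _

set_option maxHeartbeats 1000000 in
lemma rank_projMatrix_le (b : OrthonormalBasis (Fin N) ℂ (EuclideanSpace ℂ (Fin N)))
    (S : Finset (Fin N)) : (projMatrix b S).rank ≤ S.card := by
  classical
  have h0 : (projMatrix b S).rank =
      Module.finrank ℂ (LinearMap.range (Matrix.toEuclideanLin (projMatrix b S))) := by
    rw [Matrix.toEuclideanLin_eq_toLin]
    exact Matrix.rank_eq_finrank_range_toLin _ _ _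
  rw [h0]
  have hrange : LinearMap.range (Matrix.toEuclideanLin (projMatrix b S)) ≤
      Submodule.span ℂ (↑(S.image b) : Set (EuclideanSpace ℂ (Fin N))) := by
    rintro y ⟨x, rfl⟩
    have h1 : Matrix.toEuclideanLin (projMatrix b S) x = projCLM b S x := by
      rw [← Matrix.coe_toEuclideanCLM_eq_toEuclideanLin, toEuclideanCLM_projMatrix]
      rfl
    rw [h1, projCLM_apply]
    exact Submodule.sum_mem _ fun j hj => Submodule.smul_mem _ _
      (Submodule.subset_span (by simpa using ⟨j, hj, rfl⟩))
  calc Module.finrank ℂ (LinearMap.range (Matrix.toEuclideanLin (projMatrix b S)))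
      ≤ Module.finrank ℂ (Submodule.span ℂ (↑(S.image b) : Set (EuclideanSpace ℂ (Fin N)))) :=
        Submodule.finrank_mono hrange
    _ ≤ (S.image b).card := finrank_span_finset_le_card _
    _ ≤ S.card := Finset.card_image_le

lemma specNorm_sub_mul_proj_le (A : Matrix (Fin N) (Fin N) ℂ) (t : ℝ) (ht : 0 ≤ t) :
    specNorm (A - A * projMatrix (Matrix.isHermitian_conjTranspose_mul_self A).eigenvectorBasis
      (Finset.univ.filter fun j =>
        t ^ 2 < (Matrix.isHermitian_conjTranspose_mul_self A).eigenvalues j)) ≤ t := by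
  set hH := Matrix.isHermitian_conjTranspose_mul_self A with hHdef
  set b := hH.eigenvectorBasis with hbdef
  set S := Finset.univ.filter fun j => t ^ 2 < hH.eigenvalues j with hSdef
  rw [specNorm]
  refine ContinuousLinearMap.opNorm_le_bound _ ht fun x => ?_
  have happ : Matrix.toEuclideanCLM (𝕜 := ℂ) (A - A * projMatrix b S) x =
      Matrix.toEuclideanCLM (𝕜 := ℂ) A (x - projCLM b S x) := by
    rw [map_sub, _root_.map_mul, toEuclideanCLM_projMatrix]
    simp [ContinuousLinearMap.sub_apply, ContinuousLinearMap.mul_apply]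
  rw [happ]
  set y := x - projCLM b S x with hydef
  have hc : ∀ j, ⟪b j, y⟫_ℂ = if j ∈ S then 0 else ⟪b j, x⟫_ℂ := by
    intro j
    rw [hydef, inner_sub_right, inner_projCLM]
    by_cases hj : j ∈ S <;> simp [hj]
  have hsq : ‖Matrix.toEuclideanCLM (𝕜 := ℂ) A y‖ ^ 2 ≤ (t * ‖x‖) ^ 2 := by
    rw [norm_CLM_apply_sq]
    have hbd : ∀ j ∈ Finset.univ, hH.eigenvalues j * ‖⟪b j, y⟫_ℂ‖ ^ 2 ≤
        t ^ 2 * ‖⟪b j, x⟫_ℂ‖ ^ 2 := by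
      intro j _
      rw [hc j]
      by_cases hj : j ∈ S
      · simp [hj]
        positivity
      · simp only [hj, if_false]
        have hle : hH.eigenvalues j ≤ t ^ 2 := by
          by_contra hlt
          exact hj (Finset.mem_filter.mpr ⟨Finset.mem_univ j, lt_of_not_ge hlt⟩)
        exact mul_le_mul_of_nonneg_right hle (by positivity)
    calc ∑ j, hH.eigenvalues j * ‖⟪b j, y⟫_ℂ‖ ^ 2
        ≤ ∑ j, t ^ 2 * ‖⟪b j, x⟫_ℂ‖ ^ 2 := Finset.sum_le_sum hbd
      _ = t ^ 2 * ∑ j, ‖⟪b j, x⟫_ℂ‖ ^ 2 := by rw [Finset.mul_sum]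
      _ = (t * ‖x‖) ^ 2 := by rw [← parseval b x]; ring
  have h1 := Real.sqrt_le_sqrt hsq
  rwa [Real.sqrt_sq (norm_nonneg _), Real.sqrt_sq (by positivity)] at h1

set_option maxHeartbeats 1000000 in
lemma card_filter_lt_le_rank (Am R E : Matrix (Fin N) (Fin N) ℂ) (hA : Am = R + E) :
    (Finset.univ.filter fun j => specNorm E < singularValues Am j).card ≤ R.rank := by
  classical
  set hH := Matrix.isHermitian_conjTranspose_mul_self Am with hHdef
  set b := hH.eigenvectorBasis with hbdef
  set t := specNorm E with htdef
  have ht0 : 0 ≤ t := norm_nonneg _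
  set S := Finset.univ.filter fun j => t < singularValues Am j with hSdef
  set V := Submodule.span ℂ (Set.range fun j : {j // j ∈ S} => b j) with hVdef
  set K := LinearMap.ker (Matrix.toEuclideanLin R) with hKdef
  have hμpos : ∀ j ∈ S, t ^ 2 < hH.eigenvalues j := by
    intro j hj
    have hσ : t < Real.sqrt (hH.eigenvalues j) := (Finset.mem_filter.mp hj).2
    exact (Real.lt_sqrt ht0).mp hσ
  have hdisj : V ⊓ K = ⊥ := by
    rw [Submodule.eq_bot_iff]
    rintro x hx
    obtain ⟨hxV, hxK⟩ := Submodule.mem_inf.mp hx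
    by_contra hx0
    have hcoef : ∀ i ∉ S, ⟪b i, x⟫_ℂ = 0 := by
      intro i hi
      have hgen : ∀ y ∈ V, ⟪b i, y⟫_ℂ = 0 := by
        intro y hy
        induction hy using Submodule.span_induction with
        | mem z hz =>
          obtain ⟨⟨j, hj⟩, rfl⟩ := hz
          have hij : i ≠ j := fun h => hi (h ▸ hj)
          simp [orthonormal_iff_ite.mp b.orthonormal, hij]
        | zero => simp
        | add y z _ _ hy hz => rw [inner_add_right, hy, hz, add_zero]
        | smul c y _ hy => rw [inner_smul_right, hy, mul_zero]
      exact hgen x hxV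
    have hpar : ‖x‖ ^ 2 = ∑ i ∈ S, ‖⟪b i, x⟫_ℂ‖ ^ 2 := by
      rw [parseval b x]
      exact (Finset.sum_subset (Finset.subset_univ S)
        (fun i _ hi => by rw [hcoef i hi]; simp)).symm
    have hxpos : 0 < ‖x‖ ^ 2 := pow_pos (norm_pos_iff.mpr hx0) 2
    have hTA : ‖Matrix.toEuclideanCLM (𝕜 := ℂ) Am x‖ ^ 2
        = ∑ i ∈ S, hH.eigenvalues i * ‖⟪b i, x⟫_ℂ‖ ^ 2 := by
      rw [norm_CLM_apply_sq]
      exact (Finset.sum_subset (Finset.subset_univ S)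
        (fun i _ hi => by rw [hcoef i hi]; simp)).symm
    have hex : ∃ i ∈ S, ⟪b i, x⟫_ℂ ≠ 0 := by
      by_contra hall
      push_neg at hall
      have hz : ∑ i ∈ S, ‖⟪b i, x⟫_ℂ‖ ^ 2 = 0 :=
        Finset.sum_eq_zero (fun i hi => by rw [hall i hi]; simp)
      rw [hpar, hz] at hxpos
      exact lt_irrefl _ hxpos
    obtain ⟨i₀, hi₀S, hi₀⟩ := hex
    have hSne : S.Nonempty := ⟨i₀, hi₀S⟩
    have hstrict : t ^ 2 * ‖x‖ ^ 2 < ‖Matrix.toEuclideanCLM (𝕜 := ℂ) Am x‖ ^ 2 := by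
      rw [hTA, hpar, Finset.mul_sum]
      refine Finset.sum_lt_sum (fun i hi => ?_) ⟨i₀, hi₀S, ?_⟩
      · exact mul_le_mul_of_nonneg_right (le_of_lt (hμpos i hi)) (by positivity)
      · have : (0:ℝ) < ‖⟪b i₀, x⟫_ℂ‖ ^ 2 := pow_pos (norm_pos_iff.mpr hi₀) 2
        exact mul_lt_mul_of_pos_right (hμpos i₀ hi₀S) this
    have hTAe : Matrix.toEuclideanCLM (𝕜 := ℂ) Am x = Matrix.toEuclideanCLM (𝕜 := ℂ) E x := by
      rw [hA, map_add, ContinuousLinearMap.add_apply]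
      have hker : Matrix.toEuclideanCLM (𝕜 := ℂ) R x = 0 := by
        have : Matrix.toEuclideanLin R x = 0 := hxK
        rw [← Matrix.coe_toEuclideanCLM_eq_toEuclideanLin] at this
        exact this
      rw [hker, zero_add]
    have hle : ‖Matrix.toEuclideanCLM (𝕜 := ℂ) Am x‖ ^ 2 ≤ t ^ 2 * ‖x‖ ^ 2 := by
      rw [hTAe]
      have h1 : ‖Matrix.toEuclideanCLM (𝕜 := ℂ) E x‖ ≤ t * ‖x‖ :=
        (Matrix.toEuclideanCLM (𝕜 := ℂ) E).le_opNorm x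
      calc ‖Matrix.toEuclideanCLM (𝕜 := ℂ) E x‖ ^ 2 ≤ (t * ‖x‖) ^ 2 := by
            exact pow_le_pow_left₀ (norm_nonneg _) h1 2
        _ = t ^ 2 * ‖x‖ ^ 2 := by ring
    exact absurd (lt_of_lt_of_le hstrict hle) (lt_irrefl _)
  have hliV : Module.finrank ℂ V = S.card := by
    have hli : LinearIndependent ℂ (fun j : {j // j ∈ S} => b j) :=
      b.orthonormal.linearIndependent.comp _ Subtype.val_injective
    rw [hVdef, finrank_span_eq_card hli, Fintype.card_coe]
  have hsum : Module.finrank ℂ V + Module.finrank ℂ K ≤ N := by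
    have h := Submodule.finrank_sup_add_finrank_inf_eq V K
    rw [hdisj, finrank_bot ℂ (EuclideanSpace ℂ (Fin N)), add_zero] at h
    rw [← h]
    calc Module.finrank ℂ ↥(V ⊔ K) ≤ Module.finrank ℂ (EuclideanSpace ℂ (Fin N)) :=
          Submodule.finrank_le _
      _ = N := by simp [finrank_euclideanSpace]
  have hrn : Module.finrank ℂ (LinearMap.range (Matrix.toEuclideanLin R))
      + Module.finrank ℂ K = N := by
    have h := LinearMap.finrank_range_add_finrank_ker (Matrix.toEuclideanLin R : EuclideanSpace ℂ (Fin N) →ₗ[ℂ] EuclideanSpace ℂ (Fin N))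
    rw [hKdef]
    rw [h]
    simp [finrank_euclideanSpace]
  have hrank : R.rank = Module.finrank ℂ (LinearMap.range (Matrix.toEuclideanLin R)) := by
    rw [Matrix.toEuclideanLin_eq_toLin]
    exact Matrix.rank_eq_finrank_range_toLin _ _ _
  omega

lemma backward (A : (N : ℕ) → Matrix (Fin N) (Fin N) ℂ)
    (R E : (N : ℕ) → Matrix (Fin N) (Fin N) ℂ)
    (hsplit : ∀ N, A N = R N + E N)
    (hrank : Tendsto (fun N : ℕ => ((R N).rank : ℝ) / N) atTop (nhds 0))
    (hnorm : Tendsto (fun N : ℕ => specNorm (E N)) atTop (nhds 0))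
    (F : ℝ → ℝ) (hF : Continuous F) (hFc : HasCompactSupport F) :
    Tendsto (fun N : ℕ => (1 / (N : ℝ)) * ∑ j : Fin N, F (singularValues (A N) j))
      atTop (nhds (F 0)) := by
  classical
  obtain ⟨C, hC⟩ := hF.bounded_above_of_compact_support hFc
  have hC0 : 0 ≤ C := le_trans (norm_nonneg _) (hC 0)
  have hUC : UniformContinuous F := hFc.uniformContinuous_of_continuous hF
  rw [Metric.tendsto_atTop]
  intro ε hε
  obtain ⟨δ, hδ0, hδ⟩ := Metric.uniformContinuous_iff.mp hUC (ε/2) (by linarith)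
  set D : ℝ := 2 * C + 1 with hDdef
  have hD0 : 0 < D := by linarith
  obtain ⟨N₁, hN₁⟩ := (Metric.tendsto_atTop.mp hnorm) δ hδ0
  obtain ⟨N₂, hN₂⟩ := (Metric.tendsto_atTop.mp hrank) (ε/(2*D)) (by positivity)
  refine ⟨max (max N₁ N₂) 1, fun n hn => ?_⟩
  have hn1 : 1 ≤ n := le_trans (le_max_right _ _) hn
  have hnN₁ : N₁ ≤ n := le_trans (le_trans (le_max_left _ _) (le_max_left _ _)) hn
  have hnN₂ : N₂ ≤ n := le_trans (le_trans (le_max_right _ _) (le_max_left _ _)) hn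
  have hnpos : (0:ℝ) < n := by exact_mod_cast hn1
  have hEn : specNorm (E n) < δ := by
    have := hN₁ n hnN₁
    rw [Real.dist_eq, sub_zero] at this
    exact lt_of_abs_lt this
  have hRn : ((R n).rank : ℝ) / n < ε/(2*D) := by
    have := hN₂ n hnN₂
    rw [Real.dist_eq, sub_zero] at this
    exact lt_of_abs_lt this
  set σ := singularValues (A n) with hσdef
  have hσ0 : ∀ j, 0 ≤ σ j := fun j => Real.sqrt_nonneg _
  set T := Finset.univ.filter fun j : Fin n => specNorm (E n) < σ j with hTdef
  have hcard : (T.card : ℝ) ≤ ((R n).rank : ℝ) := by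
    exact_mod_cast card_filter_lt_le_rank (A n) (R n) (E n) (hsplit n)
  have hdiff : (1 / (n : ℝ)) * ∑ j : Fin n, F (σ j) - F 0
      = (1 / (n : ℝ)) * ∑ j : Fin n, (F (σ j) - F 0) := by
    rw [Finset.sum_sub_distrib, Finset.sum_const, Finset.card_univ, Fintype.card_fin,
      nsmul_eq_mul, mul_sub]
    field_simp
  rw [Real.dist_eq, hdiff, abs_mul]
  have habs1 : |1 / (n:ℝ)| = 1 / (n:ℝ) := abs_of_nonneg (by positivity)
  rw [habs1]
  have hsum : |∑ j : Fin n, (F (σ j) - F 0)| ≤ ∑ j : Fin n, |F (σ j) - F 0| :=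
    Finset.abs_sum_le_sum_abs _ _
  have hsplitsum : ∑ j : Fin n, |F (σ j) - F 0|
      = ∑ j ∈ T, |F (σ j) - F 0| + ∑ j ∈ Finset.univ.filter (fun j => ¬ (specNorm (E n) < σ j)), |F (σ j) - F 0| :=
    (Finset.sum_filter_add_sum_filter_not _ _ _).symm
  have hbig : ∑ j ∈ T, |F (σ j) - F 0| ≤ (T.card : ℝ) * (2 * C) := by
    rw [← nsmul_eq_mul]
    refine Finset.sum_le_card_nsmul _ _ _ fun j _ => ?_
    calc |F (σ j) - F 0| ≤ |F (σ j)| + |F 0| := abs_sub _ _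
      _ ≤ C + C := add_le_add (hC _) (hC _)
      _ = 2 * C := by ring
  have hsmall : ∑ j ∈ Finset.univ.filter (fun j => ¬ (specNorm (E n) < σ j)), |F (σ j) - F 0|
      ≤ (n : ℝ) * (ε / 2) := by
    calc ∑ j ∈ Finset.univ.filter (fun j => ¬ (specNorm (E n) < σ j)), |F (σ j) - F 0|
        ≤ (Finset.univ.filter (fun j : Fin n => ¬ (specNorm (E n) < σ j))).card • (ε/2) := by
          refine Finset.sum_le_card_nsmul _ _ _ fun j hj => ?_
          have hj' : σ j ≤ specNorm (E n) := not_lt.mp (Finset.mem_filter.mp hj).2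
          have hdist : dist (σ j) 0 < δ := by
            rw [Real.dist_eq, sub_zero, abs_of_nonneg (hσ0 j)]
            exact lt_of_le_of_lt hj' hEn
          exact le_of_lt (hδ hdist)
      _ ≤ (n : ℝ) * (ε / 2) := by
          rw [nsmul_eq_mul]
          have hc : ((Finset.univ.filter (fun j : Fin n => ¬ (specNorm (E n) < σ j))).card : ℝ)
              ≤ (n : ℝ) := by
            exact_mod_cast (Finset.card_filter_le _ _).trans (le_of_eq (by simp))
          exact mul_le_mul_of_nonneg_right hc (by linarith)
  calc (1 / (n:ℝ)) * |∑ j : Fin n, (F (σ j) - F 0)|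
      ≤ (1 / (n:ℝ)) * ((T.card : ℝ) * (2 * C) + (n : ℝ) * (ε / 2)) := by
        refine mul_le_mul_of_nonneg_left ?_ (by positivity)
        calc |∑ j : Fin n, (F (σ j) - F 0)| ≤ ∑ j : Fin n, |F (σ j) - F 0| := hsum
          _ = _ := hsplitsum
          _ ≤ (T.card : ℝ) * (2 * C) + (n : ℝ) * (ε / 2) := add_le_add hbig hsmall
    _ = ((T.card : ℝ) / n) * (2 * C) + ε / 2 := by field_simp
    _ ≤ (((R n).rank : ℝ) / n) * D + ε / 2 := by
        have h1 : ((T.card:ℝ)/n) * (2*C) ≤ (((R n).rank:ℝ)/n) * (2*C) := by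
          gcongr
        have h2 : (((R n).rank:ℝ)/n) * (2*C) ≤ (((R n).rank:ℝ)/n) * D := by
          have hr0 : (0:ℝ) ≤ ((R n).rank:ℝ)/n := by positivity
          have : 2*C ≤ D := by linarith
          exact mul_le_mul_of_nonneg_left this hr0
        linarith
    _ < ε/2 + ε/2 := by
        have h3 : (((R n).rank:ℝ)/n)*D < (ε/(2*D))*D := mul_lt_mul_of_pos_right hRn hD0
        have h4 : (ε/(2*D))*D = ε/2 := by field_simp
        linarith
    _ = ε := by ring

lemma cnt_tendsto (A : (N : ℕ) → Matrix (Fin N) (Fin N) ℂ)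
    (hyp : ∀ F : ℝ → ℝ, Continuous F → HasCompactSupport F →
      Tendsto (fun N : ℕ => (1 / (N : ℝ)) * ∑ j : Fin N, F (singularValues (A N) j))
        atTop (nhds (F 0))) (k : ℕ) :
    Tendsto (fun N : ℕ => ((Finset.univ.filter fun j : Fin N =>
      1/((k:ℝ)+1) ≤ singularValues (A N) j).card : ℝ) / N) atTop (nhds 0) := by
  classical
  set c : ℝ := 1/((k:ℝ)+1) with hcdef
  have hc0 : 0 < c := by positivity
  set F : ℝ → ℝ := fun x => max (1 - |x| / c) 0 with hFdef
  have hF0 : ∀ x, 0 ≤ F x := fun x => le_max_right _ _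
  have hFle : ∀ x, F x ≤ 1 := by
    intro x
    rw [hFdef]
    simp only [max_le_iff]
    constructor
    · have : 0 ≤ |x| / c := by positivity
      linarith
    · norm_num
  have hFzero : ∀ x, c ≤ |x| → F x = 0 := by
    intro x hx
    rw [hFdef]
    simp only
    rw [max_eq_right]
    have : (1:ℝ) ≤ |x| / c := (one_le_div hc0).mpr hx
    linarith
  have hFcont : Continuous F := (continuous_const.sub (continuous_abs.div_const c)).max
    continuous_const
  have hFsupp : HasCompactSupport F :=
    HasCompactSupport.intro (isCompact_Icc (a := -c) (b := c))
      (fun x hx => hFzero x (le_of_lt (lt_of_not_ge fun h => hx (abs_le.mp h))))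
  have hF0val : F 0 = 1 := by
    rw [hFdef]
    simp
  have hbound : ∀ N : ℕ, ((Finset.univ.filter fun j : Fin N =>
      c ≤ singularValues (A N) j).card : ℝ) / N
      ≤ 1 - (1 / (N : ℝ)) * ∑ j : Fin N, F (singularValues (A N) j) := by
    intro N
    rcases Nat.eq_zero_or_pos N with hN | hN
    · subst hN
      simp
    have hNpos : (0:ℝ) < N := by exact_mod_cast hN
    set σ := singularValues (A N) with hσdef
    have hkey : ∑ j : Fin N, F (σ j)
        ≤ ((N:ℝ) - (Finset.univ.filter fun j : Fin N => c ≤ σ j).card) := by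
      have h1 : ∑ j : Fin N, F (σ j) ≤ ∑ j : Fin N, (if c ≤ σ j then (0:ℝ) else 1) := by
        refine Finset.sum_le_sum fun j _ => ?_
        by_cases hj : c ≤ σ j
        · rw [if_pos hj, hFzero _ (le_trans hj (le_abs_self _))]
        · rw [if_neg hj]
          exact hFle _
      have h2 : ∑ j : Fin N, (if c ≤ σ j then (0:ℝ) else 1)
          = ((Finset.univ.filter fun j : Fin N => ¬ (c ≤ σ j)).card : ℝ) := by
        rw [Finset.sum_ite, Finset.sum_const, Finset.sum_const]
        simp
      have h3 : (Finset.univ.filter fun j : Fin N => c ≤ σ j).card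
          + (Finset.univ.filter fun j : Fin N => ¬ (c ≤ σ j)).card = N := by
        rw [Finset.card_filter_add_card_filter_not]
        simp
      have h4 := congrArg (Nat.cast : ℕ → ℝ) h3
      push_cast at h4
      rw [h2] at h1
      linarith
    have hmul : (1 / (N : ℝ)) * ∑ j : Fin N, F (σ j)
        ≤ (1 / (N : ℝ)) * ((N:ℝ) - (Finset.univ.filter fun j : Fin N => c ≤ σ j).card) :=
      mul_le_mul_of_nonneg_left hkey (by positivity)
    have heq : (1 / (N : ℝ)) * ((N:ℝ) - (Finset.univ.filter fun j : Fin N => c ≤ σ j).card)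
        = 1 - ((Finset.univ.filter fun j : Fin N => c ≤ σ j).card : ℝ) / N := by
      field_simp
    rw [heq] at hmul
    linarith
  have hg : Tendsto (fun N : ℕ => 1 - (1 / (N : ℝ)) * ∑ j : Fin N, F (singularValues (A N) j))
      atTop (nhds 0) := by
    have := tendsto_const_nhds (x := (1:ℝ)) (f := atTop (α := ℕ)) |>.sub (hyp F hFcont hFsupp)
    rwa [hF0val, sub_self] at this
  exact squeeze_zero (fun N => by positivity) hbound hg

lemma forward (A : (N : ℕ) → Matrix (Fin N) (Fin N) ℂ)
    (hyp : ∀ F : ℝ → ℝ, Continuous F → HasCompactSupport F →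
      Tendsto (fun N : ℕ => (1 / (N : ℝ)) * ∑ j : Fin N, F (singularValues (A N) j))
        atTop (nhds (F 0))) :
    ∃ (R E : (N : ℕ) → Matrix (Fin N) (Fin N) ℂ),
      (∀ N, A N = R N + E N) ∧
      Tendsto (fun N : ℕ => ((R N).rank : ℝ) / N) atTop (nhds 0) ∧
      Tendsto (fun N : ℕ => specNorm (E N)) atTop (nhds 0) := by
  classical
  set cnt : (N : ℕ) → ℕ → ℕ := fun N k => (Finset.univ.filter fun j : Fin N =>
      1/((k:ℝ)+1) ≤ singularValues (A N) j).card with hcntdef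
  have hMex : ∀ k : ℕ, ∃ Mk : ℕ, ∀ N ≥ Mk, ((cnt N k : ℝ)) / N < 1/((k:ℝ)+1) := by
    intro k
    obtain ⟨Mk, hMk⟩ := (Metric.tendsto_atTop.mp (cnt_tendsto A hyp k)) (1/((k:ℝ)+1))
      (by positivity)
    refine ⟨Mk, fun N hN => ?_⟩
    have := hMk N hN
    rw [Real.dist_eq, sub_zero] at this
    exact lt_of_abs_lt this
  choose M hM using hMex
  set φ : ℕ → ℕ := fun k => k + (Finset.range (k+1)).sup M with hφdef
  have hφM : ∀ k, M k ≤ φ k := fun k =>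
    le_trans (Finset.le_sup (Finset.self_mem_range_succ k)) (Nat.le_add_left _ _)
  have hφk : ∀ k, k ≤ φ k := fun k => Nat.le_add_right _ _
  set kN : ℕ → ℕ := fun n => Nat.findGreatest (fun k => φ k ≤ n) n with hkNdef
  have hkN_tendsto : Tendsto kN atTop atTop := by
    rw [Filter.tendsto_atTop]
    intro K
    rw [Filter.eventually_atTop]
    exact ⟨φ K, fun n hn => Nat.le_findGreatest (le_trans (hφk K) hn) hn⟩
  set tsel : ℕ → ℝ := fun n => 1/((kN n : ℝ)+1) with htseldef
  have htsel0 : ∀ n, 0 < tsel n := fun n => by positivity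
  have htsel_tendsto : Tendsto tsel atTop (nhds 0) :=
    tendsto_one_div_add_atTop_nhds_zero_nat.comp hkN_tendsto
  set Sf : (n : ℕ) → Finset (Fin n) := fun n => Finset.univ.filter fun j =>
    tsel n ^ 2 < (Matrix.isHermitian_conjTranspose_mul_self (A n)).eigenvalues j with hSfdef
  set R : (n : ℕ) → Matrix (Fin n) (Fin n) ℂ := fun n =>
    A n * projMatrix (Matrix.isHermitian_conjTranspose_mul_self (A n)).eigenvectorBasis (Sf n)
    with hRdef
  refine ⟨R, fun n => A n - R n, fun n => ((add_comm (R n) (A n - R n)).trans (sub_add_cancel (A n) (R n))).symm, ?_, ?_⟩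
  · -- rank part
    have hrank_cnt : ∀ n, ((R n).rank : ℝ) / n ≤ (cnt n (kN n) : ℝ) / n := by
      intro n
      have h1 : (R n).rank ≤ (Sf n).card :=
        le_trans (Matrix.rank_mul_le_right _ _) (rank_projMatrix_le _ _)
      have h2 : (Sf n).card ≤ cnt n (kN n) := by
        refine Finset.card_le_card ?_
        intro j hj
        rw [hSfdef] at hj
        simp only [Finset.mem_filter] at hj ⊢
        refine ⟨Finset.mem_univ _, ?_⟩
        exact le_of_lt ((Real.lt_sqrt (le_of_lt (htsel0 n))).mpr hj.2)
      gcongr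
      exact_mod_cast le_trans h1 h2
    have hev : ∀ᶠ n in atTop, ((R n).rank : ℝ) / n ≤ tsel n := by
      rw [Filter.eventually_atTop]
      refine ⟨φ 0, fun n hn => ?_⟩
      have hspec : φ (kN n) ≤ n := Nat.findGreatest_spec (P := fun k => φ k ≤ n) (m := 0) (Nat.zero_le n) hn
      have hMn : M (kN n) ≤ n := le_trans (hφM _) hspec
      exact le_trans (hrank_cnt n) (le_of_lt (hM (kN n) n hMn))
    exact squeeze_zero' (Filter.Eventually.of_forall fun n => by positivity) hev htsel_tendsto
  · -- norm part
    refine squeeze_zero (fun n => norm_nonneg _) (fun n => ?_) htsel_tendsto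
    exact specNorm_sub_mul_proj_le (A n) (tsel n) (le_of_lt (htsel0 n))

end ZD

/-- A matrix sequence is zero-distributed in the sense of the singular values iff it
splits as `A_N = R_N + E_N` with `rank R_N / N → 0` and `‖E_N‖₂ → 0`. -/
theorem zero_distributed_iff_rank_plus_small_norm
    (A : (N : ℕ) → Matrix (Fin N) (Fin N) ℂ) :
    (∀ F : ℝ → ℝ, Continuous F → HasCompactSupport F →
      Filter.Tendsto (fun N : ℕ => (1 / (N : ℝ)) * ∑ j : Fin N, F (singularValues (A N) j))
        Filter.atTop (nhds (F 0))) ↔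
    ∃ (R E : (N : ℕ) → Matrix (Fin N) (Fin N) ℂ),
      (∀ N, A N = R N + E N) ∧
      Filter.Tendsto (fun N : ℕ => ((R N).rank : ℝ) / N) Filter.atTop (nhds 0) ∧
      Filter.Tendsto (fun N : ℕ => specNorm (E N)) Filter.atTop (nhds 0) := by
  constructor
  · exact fun h => ZD.forward A h
  · rintro ⟨R, E, hsplit, hrank, hnorm⟩ F hF hFc
    exact ZD.backward A R E hsplit hrank hnorm F hF hFc
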